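/- arXiv:1211.5190 — 3 statements merged into one kernel-verified Lean document; each statement's English description precedes it below -/
import Mathlib

section
/- Soundness of rule (R3): for any state m of a continuous Markov kernel with finite measures θ(a)(m) and any s ∈ ℚ≥0, it cannot be that m satisfies L^a_r φ for all rationals r > s; i.e., the set of formulas {L^a_r φ : r > s} is unsatisfiable. -/
open MeasureTheory
open scoped NNReal ENNReal

inductive Formula (A : Type) : Type
  | top : Formula A
  | neg : Formula A → Formula A
  | and : Formula A → Formula A → Formula A
  | L : A → ℚ≥0 → Formula A → Formula A
  | M : A → ℚ≥0 → Formula A → Formula A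

noncomputable def sat {A : Type} {W : Type*} [MeasurableSpace W]
    (θ : A → W → Measure W) : Formula A → Set W
  | .top => Set.univ
  | .neg φ => (sat θ φ)ᶜ
  | .and φ ψ => sat θ φ ∩ sat θ ψ
  | .L a r φ => {m | ((r : ℝ≥0) : ℝ≥0∞) ≤ θ a m (sat θ φ)}
  | .M a r φ => {m | θ a m (sat θ φ) ≤ ((r : ℝ≥0) : ℝ≥0∞)}

/-- The σ-algebra on measures generated by the sets F(S,r) = {μ : μ S ≥ r}. -/
def measSigma (W : Type*) [MeasurableSpace W] : MeasurableSpace (Measure W) :=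
  MeasurableSpace.generateFrom
    {F | ∃ (S : Set W) (r : ℝ≥0), MeasurableSet S ∧ 0 < r ∧
      F = {μ : Measure W | (r : ℝ≥0∞) ≤ μ S}}

theorem soundness_R3 {A : Type} {W : Type*} [MeasurableSpace W]
    (θ : A → W → Measure W)
    (hfin : ∀ a m, IsFiniteMeasure (θ a m))
    (a : A) (s : ℚ≥0) (φ : Formula A) (m : W) :
    ¬ (∀ r : ℚ≥0, s < r → m ∈ sat θ (Formula.L a r φ)) := by
  intro h
  haveI := hfin a m
  obtain ⟨n, hn⟩ := exists_nat_gt (max (s : ℝ) ((θ a m (sat θ φ)).toReal))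
  have hs : s < (n : ℚ≥0) := by
    have := lt_of_le_of_lt (le_max_left _ _) hn
    exact_mod_cast this
  have hle := h (n : ℚ≥0) hs
  simp only [sat, Set.mem_setOf_eq] at hle
  have hne : θ a m (sat θ φ) ≠ ⊤ := measure_ne_top _ _
  have hlt := lt_of_le_of_lt (le_max_right (s : ℝ) _) hn
  have : ((n : ℝ≥0∞)) ≤ θ a m (sat θ φ) := by
    exact_mod_cast hle
  have h2 : (n : ℝ) ≤ (θ a m (sat θ φ)).toReal := by
    have := ENNReal.toReal_mono hne this
    simpa using this
  linarith
end

section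
/- Soundness of the Countable Additivity Rule: let Φ be a countable set of formulas and φ a formula such that every model satisfying all of Φ satisfies φ. If a state m of a continuous Markov kernel satisfies L^a_r(ψ) for every finite conjunction ψ of elements of Φ (equivalently, θ(a)(m)(⟦ψ⟧) ≥ r for every such ψ), then θ(a)(m)(⟦φ⟧) ≥ r. Equivalently stated for measures: if (S_i) is a countable family of measurable sets with ⋂_i S_i ⊆ T measurable, μ a finite measure, and μ(S_1 ∩ … ∩ S_k) ≥ r for every k, then μ(T) ≥ r. -/
open MeasureTheory
open scoped NNReal ENNReal

theorem soundness_CAR {M : Type*} [MeasurableSpace M]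
    (μ : Measure M) [IsFiniteMeasure μ]
    (S : ℕ → Set M) (hS : ∀ i, MeasurableSet (S i))
    (T : Set M) (hT : MeasurableSet T)
    (hsub : (⋂ i, S i) ⊆ T)
    (r : ℝ≥0)
    (h : ∀ k : ℕ, (r : ℝ≥0∞) ≤ μ (⋂ i ≤ k, S i)) :
    (r : ℝ≥0∞) ≤ μ T := by
  have key : (⋂ k, ⋂ i ≤ k, S i) = ⋂ i, S i := by
    ext x
    simp only [Set.mem_iInter]
    exact ⟨fun hx i => hx i i le_rfl, fun hx k i _ => hx i⟩
  have htend := MeasureTheory.tendsto_measure_iInter_atTop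
    (s := fun k => ⋂ i ≤ k, S i)
    (fun k => (MeasurableSet.biInter (Set.to_countable _) fun i _ => hS i).nullMeasurableSet)
    (fun a b hab => Set.biInter_subset_biInter_left fun i hi => le_trans hi hab)
    ⟨0, measure_ne_top μ _⟩
  rw [key] at htend
  have h1 : (r : ℝ≥0∞) ≤ μ (⋂ i, S i) := ge_of_tendsto' htend h
  exact h1.trans (measure_mono hsub)
end

section
/- Define, for Markov processes P = (M,m) and formulas φ, the satisfaction-distance d(P,φ) by: d(P,⊤)=0; d(P,¬φ)=1−d(P,φ); d(P,φ∧ψ)=max(d(P,φ),d(P,ψ)); d(P,L^a_r φ)=max(r−θ(a)(m)(⟦φ⟧),0); d(P,M^a_r φ)=max(θ(a)(m)(⟦φ⟧)−r,0). Then two processes P and P' satisfy: [for all formulas φ, d(P,φ)=d(P',φ)] if and only if for every formula φ and every a, r one has θ_P(a)(m)(⟦φ⟧)=θ_{P'}(a)(m')(⟦φ⟧), i.e., P and P' are logically equivalent (and hence stochastically bisimilar). -/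
open MeasureTheory
open scoped NNReal ENNReal

/-- The satisfaction-distance d((M,m),φ). -/
noncomputable def dval {A : Type} {W : Type*} [MeasurableSpace W]
    (θ : A → W → Measure W) (m : W) : Formula A → ℝ
  | .top => 0
  | .neg φ => 1 - dval θ m φ
  | .and φ ψ => max (dval θ m φ) (dval θ m ψ)
  | .L a r φ => max ((r : ℝ) - (θ a m (sat θ φ)).toReal) 0
  | .M a r φ => max ((θ a m (sat θ φ)).toReal - (r : ℝ)) 0

theorem dist_eq_iff_logically_equiv {A : Type} {W W' : Type*}
    [MeasurableSpace W] [MeasurableSpace W']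
    (θ : A → W → Measure W) (θ' : A → W' → Measure W')
    (hfin : ∀ a m, IsFiniteMeasure (θ a m))
    (hfin' : ∀ a m, IsFiniteMeasure (θ' a m))
    (m : W) (m' : W') :
    (∀ φ : Formula A, dval θ m φ = dval θ' m' φ) ↔
    (∀ (φ : Formula A) (a : A), θ a m (sat θ φ) = θ' a m' (sat θ' φ)) := by
  constructor
  · intro h φ a
    set v := (θ a m (sat θ φ)).toReal with hv
    set v' := (θ' a m' (sat θ' φ)).toReal with hv'
    obtain ⟨q, hq⟩ := exists_rat_gt (max v v')
    have hq0 : (0:ℚ) ≤ q := by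
      have h0 : (0:ℝ) ≤ max v v' := le_max_of_le_left ENNReal.toReal_nonneg
      exact_mod_cast le_of_lt (lt_of_le_of_lt h0 hq)
    set r : ℚ≥0 := ⟨q, hq0⟩ with hr
    have hrr : ((r : ℚ≥0) : ℝ) = (q : ℝ) := rfl
    have hd := h (Formula.L a r φ)
    simp only [dval] at hd
    have hv1 : v < (r : ℝ) := hrr ▸ lt_of_le_of_lt (le_max_left _ _) hq
    have hv2 : v' < (r : ℝ) := hrr ▸ lt_of_le_of_lt (le_max_right _ _) hq
    rw [max_eq_left (by linarith), max_eq_left (by linarith)] at hd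
    have hvv : v = v' := by linarith
    have := hfin a m
    have := hfin' a m'
    exact (ENNReal.toReal_eq_toReal_iff' (measure_ne_top _ _) (measure_ne_top _ _)).mp hvv
  · intro h φ
    induction φ with
    | top => rfl
    | neg φ ih => simp [dval, ih]
    | and φ ψ ih1 ih2 => simp [dval, ih1, ih2]
    | L a r φ ih => simp [dval, h φ a]
    | M a r φ ih => simp [dval, h φ a]
end
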